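/- Let K ∈ ℝ, K ≠ 0, and suppose a family of smooth functions S̄(s) on M satisfies, for an associated Ricci flow reparametrization s = σ⁻¹(t) with σ⁻¹(t) = (1-e^{-2Kt})/(2K), the trace Harnack inequality ∂_s S̄ + S̄/s - 2ḡ(∇̄S̄, V̄) + 2 Ric̄(V̄, V̄) ≥ 0 for all vector fields V̄ and s > 0, where S̄ = e^{2Kσ(s)}S, ḡ = e^{-2Kσ(s)}g, ∇̄S̄ and Ric̄ correspond to ḡ. Then the original flow satisfies ∂_t S + 2KS/(1-e^{-2Kt}) - 2g(∇S, V) + 2Ric(V,V) ≥ 0 for all vector fields V and t > 0. -/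

import Mathlib

/-- Translation of the trace Harnack inequality under the scaling
`ḡ = e^{-2Kσ(s)} g`, `s = σ⁻¹(t) = (1-e^{-2Kt})/(2K)`: if the barred quantities
`S̄ = e^{2Kt}S`, `∂_s S̄ = e^{4Kt}(2KS + ∂_t S)`, `ḡ(∇̄S̄, V̄) = e^{2Kt} g(∇S, V̄)`,
`Ric̄(V̄,V̄) = Ric(V̄,V̄)` satisfy
`∂_s S̄ + S̄/s - 2ḡ(∇̄S̄,V̄) + 2Ric̄(V̄,V̄) ≥ 0` for all `V̄` and `t > 0`, then
`∂_t S + 2KS/(1-e^{-2Kt}) - 2g(∇S,V) + 2Ric(V,V) ≥ 0` for all `V` and `t > 0`. -/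
theorem trace_harnack_rescaled {E : Type*} [NormedAddCommGroup E]
    [NormedSpace ℝ E]
    (K : ℝ) (hK : K ≠ 0)
    (S dtS : ℝ → ℝ) (gradS ric : ℝ → E → ℝ)
    (hgradlin : ∀ t (c : ℝ) (v : E), gradS t (c • v) = c * gradS t v)
    (hricquad : ∀ t (c : ℝ) (v : E), ric t (c • v) = c ^ 2 * ric t v)
    (σinv : ℝ → ℝ)
    (hσinv : ∀ t, σinv t = (1 - Real.exp (-(2 * K * t))) / (2 * K))
    (Sbar dsSbar : ℝ → ℝ) (gbar ricbar : ℝ → E → ℝ)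
    (hSbar : ∀ t, Sbar t = Real.exp (2 * K * t) * S t)
    (hdsSbar : ∀ t, dsSbar t = Real.exp (4 * K * t) * (2 * K * S t + dtS t))
    (hgbar : ∀ t v, gbar t v = Real.exp (2 * K * t) * gradS t v)
    (hricbar : ∀ t (v : E), ricbar t v = ric t v)
    (hHarnack : ∀ t, 0 < t → ∀ v : E,
      dsSbar t + Sbar t / σinv t - 2 * gbar t v + 2 * ricbar t v ≥ 0) :
    ∀ t, 0 < t → ∀ v : E,
      dtS t + 2 * K * S t / (1 - Real.exp (-(2 * K * t)))
        - 2 * gradS t v + 2 * ric t v ≥ 0 := by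
  intro t ht v
  have h := hHarnack t ht (Real.exp (2 * K * t) • v)
  rw [hdsSbar, hSbar, hσinv, hgbar, hgradlin, hricbar, hricquad] at h
  set a := Real.exp (2 * K * t) with ha
  have hapos : 0 < a := Real.exp_pos _
  have ha4 : Real.exp (4 * K * t) = a ^ 2 := by
    rw [ha, sq, ← Real.exp_add]; ring_nf
  have hainv : Real.exp (-(2 * K * t)) = a⁻¹ := by
    rw [ha, ← Real.exp_neg]
  have ha1 : a ≠ 1 := by
    rw [ha]
    intro h0
    have h2K : 2 * K * t ≠ 0 := mul_ne_zero (mul_ne_zero two_ne_zero hK) (ne_of_gt ht)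
    exact h2K (Real.exp_eq_exp.mp (by rw [h0, Real.exp_zero]) : 2 * K * t = 0)
  have hm : -1 + a ≠ 0 := by
    intro h0; exact ha1 (by linarith)
  have hne : 1 - Real.exp (-(2 * K * t)) ≠ 0 := by
    rw [hainv]
    intro h0
    have : a⁻¹ = 1 := by linarith
    exact ha1 (by rwa [inv_eq_one] at this)
  have key : Real.exp (4 * K * t) * (2 * K * S t + dtS t)
      + a * S t / ((1 - Real.exp (-(2 * K * t))) / (2 * K))
      - 2 * (a * (a * gradS t v)) + 2 * (a ^ 2 * ric t v)
      = a ^ 2 * (dtS t + 2 * K * S t / (1 - Real.exp (-(2 * K * t)))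
        - 2 * gradS t v + 2 * ric t v) := by
    rw [ha4, hainv]
    have h2K : (2 : ℝ) * K ≠ 0 := mul_ne_zero two_ne_zero hK
    have hane : a ≠ 0 := ne_of_gt hapos
    have hne' : 1 - a⁻¹ ≠ 0 := hainv ▸ hne
    field_simp
    ring
  rw [key] at h
  have h2 : (0:ℝ) < a ^ 2 := by positivity
  exact (mul_nonneg_iff_of_pos_left h2).mp h
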